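/- Let K be a field, let m be a positive integer, and let a, b ∈ K. Set φ = x + a y^2 + b y^3 in K[x,y]. (i) The number of triples (c,d,e) of non-negative integers with c ≥ 1 and 4c + 2d + e equal to either 4m or 4m+1 is exactly 2m^2. (ii) The images in K[x,y]/(x, y^2)^{2m} of the 2m^2 polynomials φ^c x^d y^e, for (c,d,e) ranging over these triples, span the image of the ideal (φ, y^4)^m in K[x,y]/(x, y^2)^{2m}; since that image has dimension 2m^2, these images form a basis of it. -/

import Mathlib

set_option synthInstance.maxHeartbeats 400000

open MvPolynomial

/-- The polynomial `φ = x + a y² + b y³`, i.e. the image of `x` under the automorphism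
`g(a,b)` of `K[x,y]`. -/
noncomputable def phiPoly (K : Type*) [Field K] (a b : K) : MvPolynomial (Fin 2) K :=
  X 0 + C a * X 1 ^ 2 + C b * X 1 ^ 3

/-- The set of triples `(c,d,e)` of non-negative integers with `c ≥ 1` and
`4c + 2d + e ∈ {4m, 4m+1}`. -/
def tripleSet (m : ℕ) : Set (ℕ × ℕ × ℕ) :=
  {p | 1 ≤ p.1 ∧
    (4 * p.1 + 2 * p.2.1 + p.2.2 = 4 * m ∨ 4 * p.1 + 2 * p.2.1 + p.2.2 = 4 * m + 1)}


section SectionAux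
namespace Aux8

variable {K : Type*} [Field K] (a b : K)

/-- exponent finsupp for x^α y^β -/
noncomputable def fs (α β : ℕ) : Fin 2 →₀ ℕ := Finsupp.single 0 α + Finsupp.single 1 β

@[simp] lemma fs_apply0 (α β : ℕ) : fs α β 0 = α := by
  simp [fs, Finsupp.single_apply]

@[simp] lemma fs_apply1 (α β : ℕ) : fs α β 1 = β := by
  simp [fs, Finsupp.single_apply]

lemma fs_eq_iff {α β α' β' : ℕ} : fs α β = fs α' β' ↔ α = α' ∧ β = β' := by
  constructor
  · intro h
    constructor
    · have := congrFun (congrArg (fun f : Fin 2 →₀ ℕ => (f : Fin 2 → ℕ)) h) 0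
      simpa using this
    · have := congrFun (congrArg (fun f : Fin 2 →₀ ℕ => (f : Fin 2 → ℕ)) h) 1
      simpa using this
  · rintro ⟨rfl, rfl⟩; rfl

lemma mono_eq (α β : ℕ) : (X 0 ^ α * X 1 ^ β : MvPolynomial (Fin 2) K) = monomial (fs α β) 1 := by
  rw [X_pow_eq_monomial, X_pow_eq_monomial, monomial_mul, one_mul]; rfl

lemma fs_eta (μ : Fin 2 →₀ ℕ) : fs (μ 0) (μ 1) = μ := by
  ext i; fin_cases i <;> simp

lemma monomial_eq_smul (μ : Fin 2 →₀ ℕ) (κ : K) :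
    monomial μ κ = κ • (X 0 ^ (μ 0) * X 1 ^ (μ 1) : MvPolynomial (Fin 2) K) := by
  rw [mono_eq, fs_eta, smul_monomial, smul_eq_mul, mul_one]

/-- the basic products -/
noncomputable def u (c d e : ℕ) : MvPolynomial (Fin 2) K :=
  phiPoly K a b ^ c * X 0 ^ d * X 1 ^ e

lemma u_step (c d e : ℕ) :
    u a b (c+1) d e =
      u a b c (d+1) e + a • u a b c d (e+2) + b • u a b c d (e+3) := by
  simp only [u, phiPoly, smul_eq_C_mul]
  ring

lemma coeff_u_zero {ξ η c d e : ℕ} (h : c + d < ξ ∨ (ξ = c + d ∧ η ≠ e)) :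
    coeff (fs ξ η) (u a b c d e) = 0 := by
  induction c generalizing d e ξ η with
  | zero =>
      simp only [u, pow_zero, one_mul, mono_eq, coeff_monomial]
      rw [if_neg]
      intro hfs
      rcases fs_eq_iff.mp hfs with ⟨h1, h2⟩
      omega
  | succ c ih =>
      rw [u_step, coeff_add, coeff_add, coeff_smul, coeff_smul]
      rw [ih (d := d+1) (e := e) (by omega),
          ih (d := d) (e := e+2) (by omega),
          ih (d := d) (e := e+3) (by omega)]
      simp

lemma coeff_u_diag (c d e : ℕ) :
    coeff (fs (c + d) e) (u a b c d e) = 1 := by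
  induction c generalizing d e with
  | zero =>
      simp only [u, pow_zero, one_mul, mono_eq, coeff_monomial]
      rw [if_pos (by rw [Nat.zero_add])]
  | succ c ih =>
      rw [u_step, coeff_add, coeff_add, coeff_smul, coeff_smul]
      have h1 : c + 1 + d = c + (d + 1) := by omega
      rw [h1, ih]
      rw [coeff_u_zero a b (by omega), coeff_u_zero a b (by omega)]
      simp



/-- weight of an exponent: wt(x)=2, wt(y)=1 -/
def wt (μ : Fin 2 →₀ ℕ) : ℕ := 2 * μ 0 + μ 1

lemma wt_add (μ ν : Fin 2 →₀ ℕ) : wt (μ + ν) = wt μ + wt ν := by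
  simp [wt, Finsupp.add_apply]; ring

/-- the ideal of polynomials all of whose monomials have weight ≥ n -/
def wid (K : Type*) [Field K] (n : ℕ) : Ideal (MvPolynomial (Fin 2) K) where
  carrier := {P | ∀ μ : Fin 2 →₀ ℕ, wt μ < n → coeff μ P = 0}
  add_mem' := by
    intro P Q hP hQ μ hμ
    rw [coeff_add, hP μ hμ, hQ μ hμ, add_zero]
  zero_mem' := by intro μ _; simp
  smul_mem' := by
    intro r P hP μ hμ
    rw [smul_eq_mul, coeff_mul]
    apply Finset.sum_eq_zero
    rintro ⟨μ1, μ2⟩ hmem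
    have h12 : μ1 + μ2 = μ := Finset.HasAntidiagonal.mem_antidiagonal.mp hmem
    have : wt μ2 < n := by
      have := wt_add μ1 μ2
      rw [h12] at this
      omega
    rw [hP μ2 this, mul_zero]

lemma mul_mem_wid {s t : ℕ} {P Q : MvPolynomial (Fin 2) K}
    (hP : P ∈ wid K s) (hQ : Q ∈ wid K t) : P * Q ∈ wid K (s + t) := by
  intro μ hμ
  rw [coeff_mul]
  apply Finset.sum_eq_zero
  rintro ⟨μ1, μ2⟩ hmem
  have h12 : μ1 + μ2 = μ := Finset.HasAntidiagonal.mem_antidiagonal.mp hmem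
  have hw : wt μ1 + wt μ2 < s + t := by
    have := wt_add μ1 μ2; rw [h12] at this; omega
  rcases Nat.lt_or_ge (wt μ1) s with h | h
  · rw [hP μ1 h, zero_mul]
  · rw [hQ μ2 (by omega), mul_zero]

lemma span_le_wid2 :
    Ideal.span {(X 0 : MvPolynomial (Fin 2) K), X 1 ^ 2} ≤ wid K 2 := by
  rw [Ideal.span_le]
  rintro f (rfl | rfl)
  · intro μ hμ
    rw [coeff_X']
    rw [if_neg]
    intro h
    rw [← h] at hμ
    simp [wt, Finsupp.single_apply] at hμ
  · intro μ hμ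
    rw [X_pow_eq_monomial, coeff_monomial, if_neg]
    intro h
    rw [← h] at hμ
    simp [wt, Finsupp.single_apply] at hμ

lemma pow_le_wid (n : ℕ) :
    (Ideal.span {(X 0 : MvPolynomial (Fin 2) K), X 1 ^ 2}) ^ n ≤ wid K (2 * n) := by
  induction n with
  | zero =>
      intro f _ μ hμ
      omega
  | succ n ih =>
      rw [pow_succ]
      refine Ideal.mul_le.mpr fun r hr s hs => ?_
      have h := mul_mem_wid (ih hr) (span_le_wid2 hs)
      have h2 : 2 * (n + 1) = 2 * n + 2 := by ring
      rw [h2]; exact h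


end Aux8

open MvPolynomial Aux8

variable {K : Type*} [Field K] (a b : K)

namespace Aux8

lemma phi_mem_A :
    phiPoly K a b ∈ Ideal.span {(X 0 : MvPolynomial (Fin 2) K), X 1 ^ 2} := by
  have hx : (X 0 : MvPolynomial (Fin 2) K) ∈ Ideal.span {(X 0 : MvPolynomial (Fin 2) K), X 1 ^ 2} :=
    Ideal.subset_span (by simp)
  have hy : (X 1 ^ 2 : MvPolynomial (Fin 2) K) ∈ Ideal.span {(X 0 : MvPolynomial (Fin 2) K), X 1 ^ 2} :=
    Ideal.subset_span (by simp)
  unfold phiPoly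
  refine add_mem (add_mem hx ?_) ?_
  · exact Ideal.mul_mem_left _ _ hy
  · have : (C b * X 1 ^ 3 : MvPolynomial (Fin 2) K) = (C b * X 1) * X 1 ^ 2 := by ring
    rw [this]
    exact Ideal.mul_mem_left _ _ hy

/-- x^d y^e ∈ A^(d + e/2) and more generally u c d e ∈ A^(c+d+e/2) -/
lemma u_mem_A_pow (c d e : ℕ) :
    u a b c d e ∈ (Ideal.span {(X 0 : MvPolynomial (Fin 2) K), X 1 ^ 2}) ^ (c + d + e / 2) := by
  set A := Ideal.span {(X 0 : MvPolynomial (Fin 2) K), X 1 ^ 2} with hA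
  have hx : (X 0 : MvPolynomial (Fin 2) K) ∈ A := Ideal.subset_span (by simp)
  have hy : (X 1 ^ 2 : MvPolynomial (Fin 2) K) ∈ A := Ideal.subset_span (by simp)
  have h1 : phiPoly K a b ^ c ∈ A ^ c := Ideal.pow_mem_pow (phi_mem_A a b) c
  have h2 : (X 0 : MvPolynomial (Fin 2) K) ^ d ∈ A ^ d := Ideal.pow_mem_pow hx d
  have h3 : (X 1 : MvPolynomial (Fin 2) K) ^ e ∈ A ^ (e / 2) := by
    have he : (X 1 : MvPolynomial (Fin 2) K) ^ e = X 1 ^ (e % 2) * (X 1 ^ 2) ^ (e / 2) := by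
      rw [← pow_mul, ← pow_add]
      congr 1
      omega
    rw [he]
    exact Ideal.mul_mem_left _ _ (Ideal.pow_mem_pow hy _)
  have := Ideal.mul_mem_mul (Ideal.mul_mem_mul h1 h2) h3
  rw [← pow_add, ← pow_add] at this
  exact this

lemma u_mem_I {m c d e : ℕ} (h : 4 * m ≤ 2 * c + 2 * d + e) :
    u a b c d e ∈ (Ideal.span {(X 0 : MvPolynomial (Fin 2) K), X 1 ^ 2}) ^ (2 * m) := by
  exact Ideal.pow_le_pow_right (by omega) (u_mem_A_pow a b c d e)

end Aux8

open MvPolynomial Aux8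

variable {K : Type*} [Field K] (a b : K)

namespace Aux8

/-- the big K-submodule: span of the u_p plus the ideal I -/
noncomputable def M0 (a b : K) (m : ℕ) : Submodule K (MvPolynomial (Fin 2) K) :=
  Submodule.span K ((fun p : ℕ × ℕ × ℕ => u a b p.1 p.2.1 p.2.2) '' tripleSet m) ⊔
    Submodule.restrictScalars K
      ((Ideal.span {(X 0 : MvPolynomial (Fin 2) K), X 1 ^ 2}) ^ (2 * m))

lemma key_C (m : ℕ) : ∀ c d e : ℕ, 4 * m ≤ 4 * c + 2 * d + e →
    u a b c d e ∈ M0 a b m := by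
  intro c
  induction c with
  | zero =>
      intro d e h
      apply Submodule.mem_sup_right
      exact u_mem_I a b (by omega)
  | succ c ih =>
      intro d e h
      rcases Nat.lt_or_ge (2 * (c+1) + 2 * d + e) (4 * m) with hw | hw
      · -- weight < 4m
        rcases Nat.lt_or_ge (4 * m + 1) (4 * (c+1) + 2 * d + e) with hT | hT
        · -- T ≥ 4m+2 : expand one φ
          rw [u_step]
          refine add_mem (add_mem ?_ (Submodule.smul_mem _ _ ?_)) (Submodule.smul_mem _ _ ?_)
          · exact ih (d+1) e (by omega)
          · exact ih d (e+2) (by omega)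
          · exact ih d (e+3) (by omega)
        · -- T ∈ {4m, 4m+1} : generator
          apply Submodule.mem_sup_left
          apply Submodule.subset_span
          refine ⟨(c+1, d, e), ⟨Nat.le_add_left 1 c, ?_⟩, rfl⟩
          show 4 * (c+1) + 2 * d + e = 4 * m ∨ 4 * (c+1) + 2 * d + e = 4 * m + 1
          omega
      · apply Submodule.mem_sup_right
        exact u_mem_I a b hw

/-- elements φ^c x^d y^e of total degree T ≥ 4n -/
def SetV (a b : K) (n : ℕ) : Set (MvPolynomial (Fin 2) K) :=
  {f | ∃ c d e : ℕ, 4 * n ≤ 4 * c + 2 * d + e ∧ f = u a b c d e}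

lemma mul_mem_spanV (n : ℕ) (r : MvPolynomial (Fin 2) K) {f : MvPolynomial (Fin 2) K}
    (hf : f ∈ Submodule.span K (SetV a b n)) :
    r * f ∈ Submodule.span K (SetV a b n) := by
  induction hf using Submodule.span_induction with
  | mem v hv =>
      obtain ⟨c, d, e, hT, rfl⟩ := hv
      induction r using MvPolynomial.induction_on' with
      | monomial μ κ =>
          rw [monomial_eq_smul, smul_mul_assoc]
          apply Submodule.smul_mem
          apply Submodule.subset_span
          refine ⟨c, d + μ 0, e + μ 1, by omega, ?_⟩
          simp only [u]
          ring
      | add p q hp hq =>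
          rw [add_mul]
          exact add_mem hp hq
  | zero => rw [mul_zero]; exact zero_mem _
  | add x y _ _ hx hy => rw [mul_add]; exact add_mem hx hy
  | smul k x _ hx => rw [mul_smul_comm]; exact Submodule.smul_mem _ _ hx

lemma phi_mul_mem_spanV (n : ℕ) {f : MvPolynomial (Fin 2) K}
    (hf : f ∈ Submodule.span K (SetV a b n)) :
    phiPoly K a b * f ∈ Submodule.span K (SetV a b (n+1)) := by
  induction hf using Submodule.span_induction with
  | mem v hv =>
      obtain ⟨c, d, e, hT, rfl⟩ := hv
      apply Submodule.subset_span
      refine ⟨c + 1, d, e, by omega, ?_⟩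
      simp only [u]
      ring
  | zero => rw [mul_zero]; exact zero_mem _
  | add x y _ _ hx hy => rw [mul_add]; exact add_mem hx hy
  | smul k x _ hx => rw [mul_smul_comm]; exact Submodule.smul_mem _ _ hx

lemma y4_mul_mem_spanV (n : ℕ) {f : MvPolynomial (Fin 2) K}
    (hf : f ∈ Submodule.span K (SetV a b n)) :
    (X 1 : MvPolynomial (Fin 2) K) ^ 4 * f ∈ Submodule.span K (SetV a b (n+1)) := by
  induction hf using Submodule.span_induction with
  | mem v hv =>
      obtain ⟨c, d, e, hT, rfl⟩ := hv
      apply Submodule.subset_span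
      refine ⟨c, d, e + 4, by omega, ?_⟩
      simp only [u]
      ring
  | zero => rw [mul_zero]; exact zero_mem _
  | add x y _ _ hx hy => rw [mul_add]; exact add_mem hx hy
  | smul k x _ hx => rw [mul_smul_comm]; exact Submodule.smul_mem _ _ hx

lemma J_le_spanV (n : ℕ) {f : MvPolynomial (Fin 2) K}
    (hf : f ∈ (Ideal.span {phiPoly K a b, (X 1 : MvPolynomial (Fin 2) K) ^ 4}) ^ n) :
    f ∈ Submodule.span K (SetV a b n) := by
  induction n generalizing f with
  | zero =>
      clear hf
      induction f using MvPolynomial.induction_on' with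
      | monomial μ κ =>
          rw [monomial_eq_smul]
          apply Submodule.smul_mem
          apply Submodule.subset_span
          refine ⟨0, μ 0, μ 1, by omega, ?_⟩
          simp only [u, pow_zero, one_mul]
      | add p q hp hq => exact add_mem hp hq
  | succ n ih =>
      rw [pow_succ] at hf
      refine Submodule.mul_induction_on hf (fun r hr s hs => ?_) (fun x y hx hy => add_mem hx hy)
      rcases Ideal.mem_span_pair.mp hs with ⟨v, w, hvw⟩
      have h1 : phiPoly K a b * r ∈ Submodule.span K (SetV a b (n+1)) :=
        phi_mul_mem_spanV a b n (ih hr)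
      have h2 : (X 1 : MvPolynomial (Fin 2) K) ^ 4 * r ∈ Submodule.span K (SetV a b (n+1)) :=
        y4_mul_mem_spanV a b n (ih hr)
      have : r * s = v * (phiPoly K a b * r) + w * ((X 1 : MvPolynomial (Fin 2) K) ^ 4 * r) := by
        rw [← hvw]; ring
      rw [this]
      exact add_mem (mul_mem_spanV a b _ v h1) (mul_mem_spanV a b _ w h2)

lemma spanV_le_M0 (m : ℕ) {f : MvPolynomial (Fin 2) K}
    (hf : f ∈ Submodule.span K (SetV a b m)) : f ∈ M0 a b m := by
  induction hf using Submodule.span_induction with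
  | mem v hv =>
      obtain ⟨c, d, e, hT, rfl⟩ := hv
      exact key_C a b m c d e hT
  | zero => exact zero_mem _
  | add x y _ _ hx hy => exact add_mem hx hy
  | smul k x _ hx => exact Submodule.smul_mem _ _ hx

end Aux8

open MvPolynomial Aux8

variable {K : Type*} [Field K] (a b : K)

namespace Aux8

lemma Asq_le_B :
    (Ideal.span {(X 0 : MvPolynomial (Fin 2) K), X 1 ^ 2}) ^ 2 ≤
      Ideal.span {phiPoly K a b, (X 1 : MvPolynomial (Fin 2) K) ^ 4} := by
  set B := Ideal.span {phiPoly K a b, (X 1 : MvPolynomial (Fin 2) K) ^ 4} with hB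
  have hphi : phiPoly K a b ∈ B := Ideal.subset_span (by simp)
  have hy4 : (X 1 : MvPolynomial (Fin 2) K) ^ 4 ∈ B := Ideal.subset_span (by simp)
  have hxy2 : (X 0 : MvPolynomial (Fin 2) K) * X 1 ^ 2 ∈ B := by
    have : (X 0 : MvPolynomial (Fin 2) K) * X 1 ^ 2 =
        X 1 ^ 2 * phiPoly K a b - (C a + C b * X 1) * X 1 ^ 4 := by
      unfold phiPoly; ring
    rw [this]
    exact sub_mem (Ideal.mul_mem_left _ _ hphi) (Ideal.mul_mem_left _ _ hy4)
  have hx2 : (X 0 : MvPolynomial (Fin 2) K) * X 0 ∈ B := by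
    have : (X 0 : MvPolynomial (Fin 2) K) * X 0 =
        X 0 * phiPoly K a b - (C a + C b * X 1) * (X 0 * X 1 ^ 2) := by
      unfold phiPoly; ring
    rw [this]
    exact sub_mem (Ideal.mul_mem_left _ _ hphi) (Ideal.mul_mem_left _ _ hxy2)
  have hy2y2 : (X 1 : MvPolynomial (Fin 2) K) ^ 2 * X 1 ^ 2 ∈ B := by
    have : (X 1 : MvPolynomial (Fin 2) K) ^ 2 * X 1 ^ 2 = X 1 ^ 4 := by ring
    rw [this]; exact hy4
  rw [pow_two]
  refine Ideal.mul_le.mpr fun r hr s hs => ?_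
  rcases Ideal.mem_span_pair.mp hr with ⟨r1, r2, hr12⟩
  rcases Ideal.mem_span_pair.mp hs with ⟨s1, s2, hs12⟩
  have : r * s = (r1 * s1) * (X 0 * X 0) + (r1 * s2 + r2 * s1) * (X 0 * X 1 ^ 2)
      + (r2 * s2) * (X 1 ^ 2 * X 1 ^ 2) := by
    rw [← hr12, ← hs12]; ring
  rw [this]
  exact add_mem (add_mem (Ideal.mul_mem_left _ _ hx2) (Ideal.mul_mem_left _ _ hxy2))
    (Ideal.mul_mem_left _ _ hy2y2)

/-- each basis element lies in J = (φ, y⁴)^m -/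
lemma u_mem_J {m : ℕ} {c d e : ℕ} (hc : 1 ≤ c) (hcm : c ≤ m)
    (hT : 4 * m ≤ 4 * c + 2 * d + e) :
    u a b c d e ∈ (Ideal.span {phiPoly K a b, (X 1 : MvPolynomial (Fin 2) K) ^ 4}) ^ m := by
  set A := Ideal.span {(X 0 : MvPolynomial (Fin 2) K), X 1 ^ 2} with hA
  set B := Ideal.span {phiPoly K a b, (X 1 : MvPolynomial (Fin 2) K) ^ 4} with hB
  have hphi : phiPoly K a b ∈ B := Ideal.subset_span (by simp)
  have h1 : phiPoly K a b ^ c ∈ B ^ c := Ideal.pow_mem_pow hphi c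
  -- x^d y^e ∈ A^(d+e/2) ≤ A^(2(m-c)) = (A²)^(m-c) ≤ B^(m-c)
  have h2 : (X 0 : MvPolynomial (Fin 2) K) ^ d * X 1 ^ e ∈ B ^ (m - c) := by
    have hu0 : (X 0 : MvPolynomial (Fin 2) K) ^ d * X 1 ^ e ∈ A ^ (d + e / 2) := by
      have := u_mem_A_pow a b 0 d e
      simpa [u, hA] using this
    have hle : A ^ (d + e / 2) ≤ A ^ (2 * (m - c)) :=
      Ideal.pow_le_pow_right (by omega)
    have h3 : A ^ (2 * (m - c)) = (A ^ 2) ^ (m - c) := by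
      rw [← pow_mul, mul_comm]
    have h4 : (A ^ 2) ^ (m - c) ≤ B ^ (m - c) :=
      Ideal.pow_right_mono (Asq_le_B a b) _
    exact h4 (h3 ▸ hle hu0)
  have := Ideal.mul_mem_mul h1 h2
  rw [← pow_add] at this
  have hcm' : c + (m - c) = m := by omega
  rw [hcm'] at this
  have hu : u a b c d e = phiPoly K a b ^ c * (X 0 ^ d * X 1 ^ e) := by
    simp only [u]; ring
  rw [hu]
  exact this

end Aux8

open Finset

namespace Aux8

def Sfin (m : ℕ) : Finset (ℕ × ℕ × ℕ) :=
  (range (m+1) ×ˢ (range (2*m+1) ×ˢ range (4*m+2))).filter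
    (fun p => 1 ≤ p.1 ∧
      (4 * p.1 + 2 * p.2.1 + p.2.2 = 4 * m ∨ 4 * p.1 + 2 * p.2.1 + p.2.2 = 4 * m + 1))

lemma tripleSet_eq_Sfin (m : ℕ) : tripleSet m = ↑(Sfin m) := by
  ext ⟨c, d, e⟩
  simp only [tripleSet, Set.mem_setOf_eq, Sfin, coe_filter, mem_product, mem_range,
    Set.mem_setOf_eq]
  constructor
  · rintro ⟨h1, h2⟩
    exact ⟨⟨by omega, by omega, by omega⟩, h1, h2⟩
  · rintro ⟨_, h1, h2⟩
    exact ⟨h1, h2⟩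

def Ffun (m : ℕ) (p : ℕ × ℕ × ℕ) : ℕ × ℕ × ℕ :=
  if p.2.1 ≤ m - p.1 then (m - p.1, p.2.1, 4*p.1 + 2*p.2.1 + p.2.2 - 4*m)
  else (2*(m - p.1) - p.2.1, m - p.1, 4*p.1 + 2*p.2.1 + p.2.2 - 4*m)

def Gfun (m : ℕ) (q : ℕ × ℕ × ℕ) : ℕ × ℕ × ℕ :=
  if q.2.1 ≤ q.1 then (m - q.1, q.2.1, 4*q.1 - 2*q.2.1 + q.2.2)
  else (m - q.2.1, 2*q.2.1 - q.1, 2*q.1 + q.2.2)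

lemma Sfin_card (m : ℕ) (hm : 1 ≤ m) : (Sfin m).card = 2 * m ^ 2 := by
  have h : (Sfin m).card = (range m ×ˢ (range m ×ˢ range 2)).card := by
    apply Finset.card_bij' (fun p _ => Ffun m p) (fun q _ => Gfun m q)
    · rintro ⟨c, d, e⟩ hp
      simp only [Sfin, mem_filter, mem_product, mem_range] at hp
      obtain ⟨⟨hc, hd, he⟩, hc1, heq⟩ := hp
      simp only [Ffun, mem_product, mem_range]
      split_ifs with h1 <;> simp only <;> omega
    · rintro ⟨i, j, ε⟩ hq
      simp only [mem_product, mem_range] at hq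
      obtain ⟨hi, hj, hε⟩ := hq
      simp only [Gfun, Sfin, mem_filter, mem_product, mem_range]
      split_ifs with h1 <;> simp only <;> omega
    · rintro ⟨c, d, e⟩ hp
      simp only [Sfin, mem_filter, mem_product, mem_range] at hp
      obtain ⟨⟨hc, hd, he⟩, hc1, heq⟩ := hp
      simp only [Ffun, Gfun]
      split_ifs <;> simp_all [Prod.ext_iff] <;> omega
    · rintro ⟨i, j, ε⟩ hq
      simp only [mem_product, mem_range] at hq
      obtain ⟨hi, hj, hε⟩ := hq
      simp only [Ffun, Gfun]
      split_ifs <;> simp_all [Prod.ext_iff] <;> omega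
  rw [h]
  simp only [card_product, card_range]
  ring

end Aux8

open MvPolynomial Aux8

variable {K : Type*} [Field K] (a b : K)

namespace Aux8

lemma wt_fs (α β : ℕ) : wt (fs α β) = 2 * α + β := by simp [wt]

lemma triple_inj {m : ℕ} {p q : ℕ × ℕ × ℕ} (hp : p ∈ tripleSet m) (hq : q ∈ tripleSet m)
    (h1 : p.1 + p.2.1 = q.1 + q.2.1) (h2 : p.2.2 = q.2.2) : p = q := by
  obtain ⟨c, d, e⟩ := p
  obtain ⟨c', d', e'⟩ := q
  obtain ⟨hp1, hp2⟩ := hp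
  obtain ⟨hq1, hq2⟩ := hq
  simp only at *
  have : c = c' ∧ d = d' ∧ e = e' := by omega
  simp [this.1, this.2.1, this.2.2]

end Aux8

end SectionAux

open Aux8 in
set_option maxHeartbeats 1000000 in
theorem basis_of_image_of_orbit_ideal
    (K : Type*) [Field K] (m : ℕ) (hm : 1 ≤ m) (a b : K) :
    (tripleSet m).ncard = 2 * m ^ 2 ∧
    Submodule.span K
        ((Ideal.Quotient.mk
            ((Ideal.span {(X 0 : MvPolynomial (Fin 2) K), X 1 ^ 2}) ^ (2 * m))) ''
          ((fun p : ℕ × ℕ × ℕ =>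
              phiPoly K a b ^ p.1 * X 0 ^ p.2.1 * X 1 ^ p.2.2) '' tripleSet m))
      = Submodule.restrictScalars K
          (Ideal.map
            (Ideal.Quotient.mk
              ((Ideal.span {(X 0 : MvPolynomial (Fin 2) K), X 1 ^ 2}) ^ (2 * m)))
            ((Ideal.span {phiPoly K a b, X 1 ^ 4}) ^ m)) ∧
    LinearIndependent K (fun p : tripleSet m =>
      (Ideal.Quotient.mk
          ((Ideal.span {(X 0 : MvPolynomial (Fin 2) K), X 1 ^ 2}) ^ (2 * m)))
        (phiPoly K a b ^ (p : ℕ × ℕ × ℕ).1 * X 0 ^ (p : ℕ × ℕ × ℕ).2.1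
          * X 1 ^ (p : ℕ × ℕ × ℕ).2.2)) := by
  set Ip := (Ideal.span {(X 0 : MvPolynomial (Fin 2) K), X 1 ^ 2}) ^ (2 * m) with hIp
  set J := (Ideal.span {phiPoly K a b, (X 1 : MvPolynomial (Fin 2) K) ^ 4}) ^ m with hJ
  set mk := Ideal.Quotient.mk Ip with hmk
  have hufun : (fun p : ℕ × ℕ × ℕ =>
      phiPoly K a b ^ p.1 * X 0 ^ p.2.1 * X 1 ^ p.2.2) =
      (fun p : ℕ × ℕ × ℕ => u a b p.1 p.2.1 p.2.2) := rfl
  refine ⟨?_, ?_, ?_⟩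
  · -- cardinality
    rw [tripleSet_eq_Sfin, Set.ncard_coe_finset]
    exact Sfin_card m hm
  · -- spanning
    apply le_antisymm
    · rw [Submodule.span_le]
      rintro x ⟨y, ⟨p, hp, rfl⟩, rfl⟩
      simp only [Submodule.coe_restrictScalars, SetLike.mem_coe,
        Submodule.restrictScalars_mem]
      apply Ideal.mem_map_of_mem
      obtain ⟨hc1, hT⟩ := hp
      exact u_mem_J a b hc1 (by omega) (by omega)
    · intro ξ hξ
      rw [Submodule.restrictScalars_mem] at hξ
      obtain ⟨f, hfJ, rfl⟩ :=
        Ideal.mem_image_of_mem_map_of_surjective mk Ideal.Quotient.mk_surjective hξ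
      have hf1 : f ∈ M0 a b m := spanV_le_M0 a b m (J_le_spanV a b m hfJ)
      rw [show M0 a b m = _ ⊔ _ from rfl, Submodule.mem_sup] at hf1
      obtain ⟨g, hg, w, hw, rfl⟩ := hf1
      rw [Submodule.restrictScalars_mem] at hw
      have hmkw : mk w = 0 := Ideal.Quotient.eq_zero_iff_mem.mpr hw
      have : mk (g + w) = mk g := by rw [map_add, hmkw, add_zero]
      rw [this]
      set mkL := (Ideal.Quotient.mkₐ K Ip).toLinearMap with hmkL
      have hco : ∀ x, mkL x = mk x := fun x => by
        simp [hmkL, Ideal.Quotient.mkₐ_eq_mk, hmk]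
      have h1 : mkL g ∈ Submodule.map mkL
          (Submodule.span K ((fun p : ℕ × ℕ × ℕ => u a b p.1 p.2.1 p.2.2) '' tripleSet m)) :=
        Submodule.mem_map_of_mem hg
      rw [Submodule.map_span] at h1
      rw [show ⇑mkL = ⇑mk from funext hco] at h1
      rw [hufun]
      exact h1
  · -- linear independence
    classical
    rw [linearIndependent_iff']
    intro s g hsum i his
    by_contra h0
    set P : MvPolynomial (Fin 2) K :=
      ∑ p ∈ s, g p • u a b (p : ℕ × ℕ × ℕ).1 (p : ℕ × ℕ × ℕ).2.1 (p : ℕ × ℕ × ℕ).2.2 with hP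
    have hPI : P ∈ Ip := by
      rw [← Ideal.Quotient.eq_zero_iff_mem]
      have : mk P = ∑ p ∈ s, g p •
          mk (u a b (p : ℕ × ℕ × ℕ).1 (p : ℕ × ℕ × ℕ).2.1 (p : ℕ × ℕ × ℕ).2.2) := by
        rw [hP]
        rw [show (mk : MvPolynomial (Fin 2) K → _) = ⇑(Ideal.Quotient.mkₐ K Ip) by
          rw [Ideal.Quotient.mkₐ_eq_mk]]
        rw [map_sum]
        exact Finset.sum_congr rfl fun p _ => map_smul _ _ _
      rw [this]
      exact hsum
    -- the support of nonzero coefficients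
    set t := s.filter (fun p => g p ≠ 0) with ht
    have hit : i ∈ t := Finset.mem_filter.mpr ⟨his, h0⟩
    have htne : t.Nonempty := ⟨i, hit⟩
    set img := t.image (fun p : tripleSet m => (p : ℕ × ℕ × ℕ).1 + (p : ℕ × ℕ × ℕ).2.1) with himg
    have himgne : img.Nonempty := htne.image _
    set sstar := img.max' himgne with hsstar
    obtain ⟨pst, hpst, hps⟩ := Finset.mem_image.mp (img.max'_mem himgne)
    have hps' : (pst : ℕ × ℕ × ℕ).1 + (pst : ℕ × ℕ × ℕ).2.1 = sstar := hps
    have hpsts : pst ∈ s := (Finset.mem_filter.mp hpst).1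
    have hgpst : g pst ≠ 0 := (Finset.mem_filter.mp hpst).2
    obtain ⟨hc1, hT⟩ := pst.2
    -- coefficient computation
    have hcoeff : coeff (fs sstar (pst : ℕ × ℕ × ℕ).2.2) P = g pst := by
      rw [hP, coeff_sum]
      rw [Finset.sum_eq_single pst]
      · rw [coeff_smul, ← hps', coeff_u_diag, smul_eq_mul, mul_one]
      · intro p hpss hpne
        rw [coeff_smul]
        rcases eq_or_ne (g p) 0 with hg0 | hg0
        · rw [hg0]; simp
        · have hpt : p ∈ t := Finset.mem_filter.mpr ⟨hpss, hg0⟩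
          have hle : (p : ℕ × ℕ × ℕ).1 + (p : ℕ × ℕ × ℕ).2.1 ≤ sstar :=
            img.le_max' _ (Finset.mem_image.mpr ⟨p, hpt, rfl⟩)
          rcases Nat.lt_or_ge ((p : ℕ × ℕ × ℕ).1 + (p : ℕ × ℕ × ℕ).2.1) sstar with hlt | hge
          · rw [coeff_u_zero a b (Or.inl hlt)]
            simp
          · have heq : (p : ℕ × ℕ × ℕ).1 + (p : ℕ × ℕ × ℕ).2.1 = sstar := le_antisymm hle hge
            have hene : (pst : ℕ × ℕ × ℕ).2.2 ≠ (p : ℕ × ℕ × ℕ).2.2 := by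
              intro he
              apply hpne
              apply Subtype.ext
              exact (triple_inj p.2 pst.2 (by omega) he.symm)
            rw [coeff_u_zero a b (Or.inr ⟨heq.symm, hene⟩)]
            simp
      · intro habs
        exact absurd hpsts habs
    -- but the coefficient must vanish
    have hwt : wt (fs sstar (pst : ℕ × ℕ × ℕ).2.2) < 2 * (2 * m) := by
      rw [wt_fs]
      omega
    have h0' : coeff (fs sstar (pst : ℕ × ℕ × ℕ).2.2) P = 0 := pow_le_wid (2 * m) hPI _ hwt
    rw [hcoeff] at h0'
    exact hgpst h0'
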